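/- For all integers r ≥ 1 and c ≥ 1 there exists an integer N₀ (depending only on r and c) such that for every integer N ≥ N₀ there exists a family S of N^c subsets of Fin (N^(2r)), each of size N^(2r−1), with the following property: for every two distinct sets A, B ∈ S, if a set T is drawn uniformly at random from all N-element subsets of A, then the probability that |T ∩ B| ≥ 2·c·r·log N is at most N^(−c·r), where log denotes the natural logarithm. -/

import Mathlib

open Finset
open scoped ENNReal NNReal


lemma choose_mul_pow_le : ∀ (L m N : ℕ), L ≤ N →
    (m - L).choose (N - L) * (m - L) ^ L ≤ m.choose N * N ^ L := by
  intro L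
  induction L with
  | zero => intro m N _; simp
  | succ L ih =>
    intro m N hL
    obtain ⟨N', rfl⟩ : ∃ N', N = N' + 1 := ⟨N - 1, by omega⟩
    cases m with
    | zero =>
      have : (0 : ℕ) - (L + 1) = 0 := by omega
      simp [this, zero_pow]
    | succ m' =>
      have h1 : m' + 1 - (L + 1) = m' - L := by omega
      have h2 : N' + 1 - (L + 1) = N' - L := by omega
      rw [h1, h2]
      calc (m' - L).choose (N' - L) * (m' - L) ^ (L + 1)
          = ((m' - L).choose (N' - L) * (m' - L) ^ L) * (m' - L) := by ring
        _ ≤ (m'.choose N' * N' ^ L) * (m' + 1) :=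
            Nat.mul_le_mul (ih m' N' (by omega)) (by omega)
        _ = ((m' + 1) * m'.choose N') * N' ^ L := by ring
        _ = ((m' + 1).choose (N' + 1) * (N' + 1)) * N' ^ L := by
            rw [Nat.add_one_mul_choose_eq]
        _ ≤ (m' + 1).choose (N' + 1) * (N' + 1) ^ (L + 1) := by
            rw [pow_succ]
            calc (m' + 1).choose (N' + 1) * (N' + 1) * N' ^ L
                ≤ (m' + 1).choose (N' + 1) * (N' + 1) * (N' + 1) ^ L := by
                  exact Nat.mul_le_mul_left _ (Nat.pow_le_pow_left (by omega) L)
              _ = (m' + 1).choose (N' + 1) * ((N' + 1) ^ L * (N' + 1)) := by ring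

lemma card_bad_le {α : Type*} [DecidableEq α] (A B : Finset α) (N L : ℕ) :
    ((A.powersetCard N).filter (fun T => L ≤ (T ∩ B).card)).card ≤
      (A ∩ B).card.choose L * ((A.card - L).choose (N - L)) := by
  classical
  have hsub : (A.powersetCard N).filter (fun T => L ≤ (T ∩ B).card) ⊆
      ((A ∩ B).powersetCard L).biUnion
        (fun U => (A.powersetCard N).filter (fun T => U ⊆ T)) := by
    intro T hT
    simp only [mem_filter, Finset.mem_powersetCard] at hT
    obtain ⟨⟨hTA, hTcard⟩, hLle⟩ := hT
    obtain ⟨U, hU1, hU2⟩ := Finset.exists_subset_card_eq hLle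
    refine Finset.mem_biUnion.2 ⟨U, ?_, ?_⟩
    · exact Finset.mem_powersetCard.2
        ⟨hU1.trans (Finset.inter_subset_inter hTA (Finset.Subset.refl B)), hU2⟩
    · exact Finset.mem_filter.2 ⟨Finset.mem_powersetCard.2 ⟨hTA, hTcard⟩,
        hU1.trans Finset.inter_subset_left⟩
  calc ((A.powersetCard N).filter (fun T => L ≤ (T ∩ B).card)).card
      ≤ (((A ∩ B).powersetCard L).biUnion
          (fun U => (A.powersetCard N).filter (fun T => U ⊆ T))).card :=
        Finset.card_le_card hsub
    _ ≤ ∑ U ∈ (A ∩ B).powersetCard L,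
          ((A.powersetCard N).filter (fun T => U ⊆ T)).card :=
        Finset.card_biUnion_le
    _ ≤ ∑ _U ∈ (A ∩ B).powersetCard L, (A.card - L).choose (N - L) := by
        apply Finset.sum_le_sum
        intro U hU
        have hUm := Finset.mem_powersetCard.1 hU
        have hUA : U ⊆ A := hUm.1.trans Finset.inter_subset_left
        have hUcard : U.card = L := hUm.2
        have hinj : ∀ T ∈ (A.powersetCard N).filter (fun T => U ⊆ T),
            T \ U ∈ (A \ U).powersetCard (N - L) := by
          intro T hT
          simp only [mem_filter, Finset.mem_powersetCard] at hT
          obtain ⟨⟨hTA, hTcard⟩, hUT⟩ := hT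
          refine Finset.mem_powersetCard.2 ⟨Finset.sdiff_subset_sdiff hTA (Finset.Subset.refl U), ?_⟩
          rw [Finset.card_sdiff_of_subset hUT, hTcard, hUcard]
        calc ((A.powersetCard N).filter (fun T => U ⊆ T)).card
            ≤ ((A \ U).powersetCard (N - L)).card := by
              apply Finset.card_le_card_of_injOn (fun T => T \ U) hinj
              intro T hT T' hT' hTT
              simp only [Finset.coe_filter, Set.mem_setOf_eq, Finset.mem_powersetCard] at hT hT'
              have : T \ U ∪ U = T' \ U ∪ U := by simp only at hTT; rw [hTT]
              rwa [Finset.sdiff_union_of_subset hT.2, Finset.sdiff_union_of_subset hT'.2] at this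
          _ = (A.card - L).choose (N - L) := by
              rw [Finset.card_powersetCard, Finset.card_sdiff_of_subset hUA, hUcard]
    _ = (A ∩ B).card.choose L * ((A.card - L).choose (N - L)) := by
        rw [Finset.sum_const, Finset.card_powersetCard, smul_eq_mul]

lemma card_cast_mem_le (P m : ℕ) [NeZero P] (D : Finset (ZMod P)) :
    (Finset.univ.filter (fun x : Fin m => ((x : ℕ) : ZMod P) ∈ D)).card
      ≤ D.card * (m / P + 1) := by
  classical
  have hP : 0 < P := Nat.pos_of_ne_zero (NeZero.ne P)
  calc (Finset.univ.filter (fun x : Fin m => ((x : ℕ) : ZMod P) ∈ D)).card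
      ≤ (D ×ˢ Finset.range (m / P + 1)).card := by
        refine Finset.card_le_card_of_injOn
          (fun x : Fin m => ((((x : ℕ) : ZMod P), (x : ℕ) / P) : ZMod P × ℕ)) ?_ ?_
        · intro x hx
          simp only [Finset.coe_filter, Finset.mem_coe, Finset.mem_filter, Set.mem_setOf_eq] at hx
          refine Finset.mem_product.2 ⟨hx.2, Finset.mem_range.2 ?_⟩
          exact Nat.lt_succ_of_le (Nat.div_le_div_right (Nat.le_of_lt x.isLt))
        · intro x _ y _ hxy
          simp only [Prod.mk.injEq] at hxy
          have hmod : (x : ℕ) % P = (y : ℕ) % P := by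
            rw [← ZMod.val_natCast, ← ZMod.val_natCast, hxy.1]
          apply Fin.ext
          calc (x : ℕ) = P * ((x : ℕ) / P) + (x : ℕ) % P := (Nat.div_add_mod _ _).symm
            _ = P * ((y : ℕ) / P) + (y : ℕ) % P := by rw [hmod, hxy.2]
            _ = (y : ℕ) := Nat.div_add_mod _ _
    _ = D.card * (m / P + 1) := by rw [Finset.card_product, Finset.card_range]

noncomputable def polyOf {F : Type*} [Semiring F] (cdeg : ℕ) (a : Fin (cdeg + 1) → F) :
    Polynomial F :=
  ∑ i : Fin (cdeg + 1), Polynomial.C (a i) * Polynomial.X ^ (i : ℕ)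

lemma polyOf_coeff {F : Type*} [Semiring F] (cdeg : ℕ) (a : Fin (cdeg + 1) → F)
    (j : Fin (cdeg + 1)) : (polyOf cdeg a).coeff (j : ℕ) = a j := by
  rw [polyOf, Polynomial.finset_sum_coeff]
  have h : ∀ i : Fin (cdeg + 1),
      (Polynomial.C (a i) * Polynomial.X ^ (i : ℕ)).coeff (j : ℕ)
        = if i = j then a i else 0 := by
    intro i
    rw [Polynomial.coeff_C_mul, Polynomial.coeff_X_pow]
    by_cases h : i = j
    · simp [h]
    · have hne : (i : ℕ) ≠ (j : ℕ) := fun hh => h (Fin.ext hh)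
      rw [if_neg (fun hh : (j : ℕ) = (i : ℕ) => hne hh.symm), mul_zero, if_neg h]
  simp_rw [h]
  simp

lemma polyOf_inj {F : Type*} [Semiring F] (cdeg : ℕ) {a b : Fin (cdeg + 1) → F}
    (hab : a ≠ b) : polyOf cdeg a ≠ polyOf cdeg b := by
  intro h
  apply hab
  funext j
  rw [← polyOf_coeff cdeg a j, ← polyOf_coeff cdeg b j, h]

lemma polyOf_natDegree_le {F : Type*} [Semiring F] (cdeg : ℕ) (a : Fin (cdeg + 1) → F) :
    (polyOf cdeg a).natDegree ≤ cdeg := by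
  apply Polynomial.natDegree_sum_le_of_forall_le
  intro i _
  exact (Polynomial.natDegree_C_mul_X_pow_le (a i) (i : ℕ)).trans (Nat.le_of_lt_succ i.isLt)

lemma roots_card_le {F : Type*} [Field F] [Fintype F] [DecidableEq F]
    (cdeg : ℕ) {a b : Fin (cdeg + 1) → F} (hab : a ≠ b) :
    ((polyOf cdeg a - polyOf cdeg b).roots.toFinset.card ≤ cdeg) ∧
      polyOf cdeg a - polyOf cdeg b ≠ 0 := by
  have hne : polyOf cdeg a - polyOf cdeg b ≠ 0 :=
    sub_ne_zero_of_ne (polyOf_inj cdeg hab)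
  refine ⟨?_, hne⟩
  calc (polyOf cdeg a - polyOf cdeg b).roots.toFinset.card
      ≤ Multiset.card (polyOf cdeg a - polyOf cdeg b).roots := Multiset.toFinset_card_le _
    _ ≤ (polyOf cdeg a - polyOf cdeg b).natDegree := Polynomial.card_roots' _
    _ ≤ max (polyOf cdeg a).natDegree (polyOf cdeg b).natDegree :=
        Polynomial.natDegree_sub_le _ _
    _ ≤ cdeg := max_le (polyOf_natDegree_le cdeg a) (polyOf_natDegree_le cdeg b)

lemma pow_le_exp_mul_factorial (L : ℕ) :
    (L : ℝ) ^ L ≤ Real.exp L * (L.factorial : ℝ) := by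
  have hfac : (0 : ℝ) < (L.factorial : ℝ) := by
    exact_mod_cast L.factorial_pos
  rw [← div_le_iff₀ hfac]
  calc (L : ℝ) ^ L / (L.factorial : ℝ)
        ≤ ∑ i ∈ Finset.range (L + 1), (L : ℝ) ^ i / (i.factorial : ℝ) := by
        exact Finset.single_le_sum (f := fun i => (L : ℝ) ^ i / (i.factorial : ℝ))
          (fun i _ => by positivity) (Finset.self_mem_range_succ L)
    _ ≤ Real.exp L := Real.sum_le_exp_of_nonneg (by positivity) (L + 1)

lemma nat_pow_le_two_pow {N k L : ℕ} (hN : 1 ≤ N)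
    (h : 2 * (k : ℝ) * Real.log N ≤ L) : ((N : ℝ)) ^ k ≤ 2 ^ L := by
  have hN0 : (0 : ℝ) < N := by exact_mod_cast hN
  have hlogN : 0 ≤ Real.log N := Real.log_nonneg (by exact_mod_cast hN)
  have h2 : (N : ℝ) ^ k = Real.exp (k * Real.log N) := by
    rw [← Real.log_pow, Real.exp_log (by positivity)]
  have h3 : (2 : ℝ) ^ L = Real.exp (L * Real.log 2) := by
    rw [← Real.log_pow, Real.exp_log (by positivity)]
  rw [h2, h3]
  apply Real.exp_le_exp.2
  have hlog2 : (1 / 2 : ℝ) ≤ Real.log 2 := by linarith [Real.log_two_gt_d9]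
  nlinarith [Nat.cast_nonneg (α := ℝ) L]

lemma two_mul_le_two_pow : ∀ {c : ℕ}, 1 ≤ c → 2 * c ≤ 2 ^ c := by
  intro c
  induction c with
  | zero => omega
  | succ c ih =>
    intro _
    rcases Nat.eq_zero_or_pos c with h | hc
    · subst h; norm_num
    · have := ih hc
      have h2 : 2 ≤ 2 ^ c := by
        calc 2 = 2 * 1 := by ring
        _ ≤ 2 * c := by omega
        _ ≤ 2 ^ c := this
      calc 2 * (c + 1) = 2 * c + 2 := by ring
        _ ≤ 2 ^ c + 2 ^ c := by omega
        _ = 2 ^ (c + 1) := by ring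
lemma key_real_bound (c r N L sN : ℕ) (hc : 1 ≤ c) (hr : 1 ≤ r)
    (hN4 : 4 ≤ N) (hL36 : 36 * c ≤ L) (h2L : 2 * L ≤ N)
    (hx : 2 * (c : ℝ) * (r : ℝ) * Real.log N ≤ (L : ℝ))
    (hsN : sN ≤ 3 * c * N ^ (2 * r - 2)) :
    (sN.choose L : ℝ) * (N : ℝ) ^ (c * r) * (N : ℝ) ^ L
      ≤ ((N ^ (2 * r - 1) - L : ℕ) : ℝ) ^ L := by
  have hN1 : 1 ≤ N := by omega
  have hNm : N ≤ N ^ (2 * r - 1) := by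
    calc N = N ^ 1 := (pow_one N).symm
    _ ≤ N ^ (2 * r - 1) := Nat.pow_le_pow_right (by omega) (by omega)
  have hLm : 2 * L ≤ N ^ (2 * r - 1) := le_trans h2L hNm
  have hmsplitR : (N : ℝ) ^ (2 * r - 2) * (N : ℝ) = (N : ℝ) ^ (2 * r - 1) := by
    rw [← pow_succ]; congr 1; omega
  have hcastsub : ((N ^ (2 * r - 1) - L : ℕ) : ℝ) = ((N ^ (2 * r - 1) : ℕ) : ℝ) - L := by
    rw [Nat.cast_sub (by omega)]
  have hhalf : ((N ^ (2 * r - 1) : ℕ) : ℝ) / 2 ≤ ((N ^ (2 * r - 1) - L : ℕ) : ℝ) := by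
    rw [hcastsub]
    have : (L : ℝ) ≤ ((N ^ (2 * r - 1) : ℕ) : ℝ) / 2 := by
      have : (2 * L : ℕ) ≤ (N ^ (2 * r - 1) : ℕ) := hLm
      have h2 : ((2 * L : ℕ) : ℝ) ≤ ((N ^ (2 * r - 1) : ℕ) : ℝ) := by exact_mod_cast this
      push_cast at h2 ⊢
      linarith
    linarith
  -- step 1 : choose * factorial ≤ (3 c N^{2r-2})^L
  have h1 : (sN.choose L : ℝ) * (L.factorial : ℝ) ≤ ((3 * c * N ^ (2 * r - 2) : ℕ) : ℝ) ^ L := by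
    have hnat : sN.choose L * L.factorial ≤ (3 * c * N ^ (2 * r - 2)) ^ L := by
      calc sN.choose L * L.factorial = L.factorial * sN.choose L := by ring
      _ = sN.descFactorial L := (Nat.descFactorial_eq_factorial_mul_choose sN L).symm
      _ ≤ sN ^ L := Nat.descFactorial_le_pow sN L
      _ ≤ (3 * c * N ^ (2 * r - 2)) ^ L := Nat.pow_le_pow_left hsN L
    exact_mod_cast hnat
  have h2 : (L : ℝ) ^ L ≤ Real.exp L * (L.factorial : ℝ) := pow_le_exp_mul_factorial L
  -- positivity facts
  have hfac : (0 : ℝ) < (L.factorial : ℝ) := by exact_mod_cast L.factorial_pos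
  have hexp : (0 : ℝ) < Real.exp L := Real.exp_pos _
  have hNR : (0 : ℝ) < (N : ℝ) := by exact_mod_cast (by omega : 0 < N)
  have hL0 : 0 < L := by omega
  -- core inequality
  have e3 : Real.exp 1 ≤ 3 := by linarith [Real.exp_one_lt_d9]
  have e0 : (0 : ℝ) < Real.exp 1 := Real.exp_pos 1
  have hexp1 : Real.exp (L : ℝ) = (Real.exp 1) ^ L := by
    rw [← Real.exp_nat_mul, mul_one]
  have h2pow : (N : ℝ) ^ (c * r) ≤ 2 ^ L := by
    apply nat_pow_le_two_pow hN1
    push_cast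
    calc 2 * ((c : ℝ) * (r : ℝ)) * Real.log N = 2 * (c : ℝ) * (r : ℝ) * Real.log N := by ring
    _ ≤ (L : ℝ) := hx
  have hcore : (3 : ℝ) ^ L * (c : ℝ) ^ L * (N : ℝ) ^ (c * r) * (Real.exp 1) ^ L * 2 ^ L
      ≤ (L : ℝ) ^ L := by
    have hc0 : (0 : ℝ) < (c : ℝ) := by exact_mod_cast hc
    calc (3 : ℝ) ^ L * (c : ℝ) ^ L * (N : ℝ) ^ (c * r) * (Real.exp 1) ^ L * 2 ^ L
        ≤ (3 : ℝ) ^ L * (c : ℝ) ^ L * 2 ^ L * (Real.exp 1) ^ L * 2 ^ L := by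
          gcongr
      _ = (3 * (c : ℝ) * 2 * Real.exp 1 * 2) ^ L := by
          rw [← mul_pow, ← mul_pow, ← mul_pow, ← mul_pow]
      _ ≤ ((36 : ℝ) * c) ^ L := by
          apply pow_le_pow_left₀ (by positivity)
          nlinarith
      _ ≤ (L : ℝ) ^ L := by
          apply pow_le_pow_left₀ (by positivity)
          have : ((36 * c : ℕ) : ℝ) ≤ (L : ℝ) := by exact_mod_cast hL36
          push_cast at this
          linarith
  -- hZ
  have hZ : ((3 * c * N ^ (2 * r - 2) : ℕ) : ℝ) ^ L
        * ((N : ℝ) ^ (c * r) * (N : ℝ) ^ L * Real.exp L)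
      ≤ ((N ^ (2 * r - 1) - L : ℕ) : ℝ) ^ L * (L : ℝ) ^ L := by
    set a : ℝ := (N : ℝ) ^ (2 * r - 2) with ha
    have ha0 : (0 : ℝ) < a := by positivity
    have hstep : (3 : ℝ) ^ L * (c : ℝ) ^ L * (N : ℝ) ^ (c * r) * (Real.exp 1) ^ L
        ≤ (L : ℝ) ^ L / 2 ^ L := by
      rw [le_div_iff₀ (by positivity)]
      calc (3 : ℝ) ^ L * (c : ℝ) ^ L * (N : ℝ) ^ (c * r) * (Real.exp 1) ^ L * 2 ^ L
          = (3 : ℝ) ^ L * (c : ℝ) ^ L * (N : ℝ) ^ (c * r) * (Real.exp 1) ^ L * 2 ^ L := rfl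
        _ ≤ (L : ℝ) ^ L := hcore
    calc ((3 * c * N ^ (2 * r - 2) : ℕ) : ℝ) ^ L
          * ((N : ℝ) ^ (c * r) * (N : ℝ) ^ L * Real.exp L)
        = a ^ L * (N : ℝ) ^ L
            * ((3 : ℝ) ^ L * (c : ℝ) ^ L * (N : ℝ) ^ (c * r) * (Real.exp 1) ^ L) := by
          push_cast
          rw [hexp1, mul_pow, mul_pow]
          ring
      _ ≤ a ^ L * (N : ℝ) ^ L * ((L : ℝ) ^ L / 2 ^ L) := by gcongr
      _ = (a * ((N : ℝ) / 2)) ^ L * (L : ℝ) ^ L := by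
          rw [mul_pow, div_pow]
          ring
      _ ≤ ((N ^ (2 * r - 1) - L : ℕ) : ℝ) ^ L * (L : ℝ) ^ L := by
          apply mul_le_mul_of_nonneg_right _ (by positivity)
          apply pow_le_pow_left₀ (by positivity)
          calc a * ((N : ℝ) / 2) = ((N : ℝ) ^ (2 * r - 1)) / 2 := by
                rw [← hmsplitR]; ring
            _ = ((N ^ (2 * r - 1) : ℕ) : ℝ) / 2 := by push_cast; ring
            _ ≤ ((N ^ (2 * r - 1) - L : ℕ) : ℝ) := hhalf
  -- assemble
  have hmulpos : (0 : ℝ) < Real.exp L * (L.factorial : ℝ) := by positivity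
  rw [← mul_le_mul_iff_left₀ hmulpos]
  calc (sN.choose L : ℝ) * (N : ℝ) ^ (c * r) * (N : ℝ) ^ L * (Real.exp L * (L.factorial : ℝ))
      = ((sN.choose L : ℝ) * (L.factorial : ℝ))
          * ((N : ℝ) ^ (c * r) * (N : ℝ) ^ L * Real.exp L) := by ring
    _ ≤ ((3 * c * N ^ (2 * r - 2) : ℕ) : ℝ) ^ L
          * ((N : ℝ) ^ (c * r) * (N : ℝ) ^ L * Real.exp L) := by
        apply mul_le_mul_of_nonneg_right h1 (by positivity)
    _ ≤ ((N ^ (2 * r - 1) - L : ℕ) : ℝ) ^ L * (L : ℝ) ^ L := hZ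
    _ ≤ ((N ^ (2 * r - 1) - L : ℕ) : ℝ) ^ L * (Real.exp L * (L.factorial : ℝ)) := by
        apply mul_le_mul_of_nonneg_left h2 (by positivity)

/-- Existence of large randomly nearly disjoint (RND) set-systems: for `N` large enough
(in terms of `r`, `c`) there is a family of `N^c` subsets of `Fin (N^(2r))`, each of
size `N^(2r-1)`, such that for every two distinct members `A`, `B`, a uniformly random
`N`-subset of `A` intersects `B` in at least `2 c r log N` elements with probability at
most `N^(-c r)`. -/
theorem rnd_set_system_exists :
    ∀ r c : ℕ, 1 ≤ r → 1 ≤ c →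
      ∃ N₀ : ℕ, ∀ N : ℕ, N₀ ≤ N →
        ∃ S : Finset (Finset (Fin (N ^ (2 * r)))),
          S.card = N ^ c ∧
          (∀ A ∈ S, A.card = N ^ (2 * r - 1)) ∧
          (∀ A ∈ S, ∀ B ∈ S, A ≠ B →
            ∀ hne : (Finset.powersetCard N A).Nonempty,
              (PMF.uniformOfFinset (Finset.powersetCard N A) hne).toOuterMeasure
                  {T | 2 * (c : ℝ) * (r : ℝ) * Real.log N ≤ ((T ∩ B).card : ℝ)}
                ≤ ENNReal.ofReal (((N : ℝ) ^ (c * r))⁻¹)) := by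
  intro r c hr hc
  classical
  have hc1 : (1 : ℝ) ≤ (c : ℝ) := by exact_mod_cast hc
  have hr1 : (1 : ℝ) ≤ (r : ℝ) := by exact_mod_cast hr
  -- eventually-true numeric conditions
  have hev : ∀ᶠ N : ℕ in Filter.atTop,
      (2 ^ (c + 1) ≤ N ∧ Real.exp 18 ≤ (N : ℝ)) ∧
        Real.log N ≤ (N : ℝ) / (16 * (c : ℝ) * (r : ℝ)) := by
    have h1 : ∀ᶠ N : ℕ in Filter.atTop, 2 ^ (c + 1) ≤ N := Filter.eventually_ge_atTop _
    have h2 : ∀ᶠ N : ℕ in Filter.atTop, Real.exp 18 ≤ (N : ℝ) :=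
      tendsto_natCast_atTop_atTop.eventually_ge_atTop _
    have h3 : ∀ᶠ N : ℕ in Filter.atTop,
        Real.log N ≤ (N : ℝ) / (16 * (c : ℝ) * (r : ℝ)) := by
      have hb := Real.isLittleO_log_id_atTop.bound
        (c := 1 / (16 * (c : ℝ) * (r : ℝ))) (by positivity)
      have hb2 := tendsto_natCast_atTop_atTop.eventually hb
      filter_upwards [hb2] with N hN
      have hN0 : (0 : ℝ) ≤ (N : ℝ) := Nat.cast_nonneg N
      have h4 := le_trans (le_abs_self _) hN
      rw [Real.norm_eq_abs, id_eq, abs_of_nonneg hN0] at h4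
      calc Real.log N ≤ 1 / (16 * (c : ℝ) * (r : ℝ)) * (N : ℝ) := h4
        _ = (N : ℝ) / (16 * (c : ℝ) * (r : ℝ)) := by ring
    exact (h1.and h2).and h3
  obtain ⟨N₀, hN₀⟩ := Filter.eventually_atTop.1 hev
  refine ⟨N₀, ?_⟩
  intro N hNN₀
  obtain ⟨⟨hN2c, hNexp⟩, hNlog⟩ := hN₀ N hNN₀
  -- basic numeric facts
  have hN4 : 4 ≤ N := by
    calc 4 = 2 ^ 2 := by norm_num
    _ ≤ 2 ^ (c + 1) := Nat.pow_le_pow_right (by omega) (by omega)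
    _ ≤ N := hN2c
  have hN1 : 1 ≤ N := by omega
  have hNR : (0 : ℝ) < (N : ℝ) := by exact_mod_cast (by omega : 0 < N)
  have hlogN0 : (0 : ℝ) ≤ Real.log N := Real.log_nonneg (by exact_mod_cast hN1)
  set x₀ : ℝ := 2 * (c : ℝ) * (r : ℝ) * Real.log N with hx₀def
  have hx₀0 : (0 : ℝ) ≤ x₀ := by positivity
  set L : ℕ := ⌈x₀⌉₊ with hLdef
  have hxL : x₀ ≤ (L : ℝ) := Nat.le_ceil x₀
  have hlog18 : (18 : ℝ) ≤ Real.log N := by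
    calc (18 : ℝ) = Real.log (Real.exp 18) := (Real.log_exp 18).symm
    _ ≤ Real.log N := Real.log_le_log (Real.exp_pos 18) hNexp
  have hL36 : 36 * c ≤ L := by
    have hrl : (18 : ℝ) ≤ (r : ℝ) * Real.log N := by nlinarith [hr1, hlog18, hlogN0]
    have h36 : ((36 * c : ℕ) : ℝ) ≤ x₀ := by
      push_cast
      rw [hx₀def]
      nlinarith [hrl, hc1, mul_le_mul_of_nonneg_left hrl (by linarith : (0:ℝ) ≤ 2 * (c:ℝ))]
    have := le_trans h36 hxL
    exact_mod_cast this
  have h2L : 2 * L ≤ N := by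
    have hceil : (L : ℝ) < x₀ + 1 := Nat.ceil_lt_add_one hx₀0
    have hx₀N : x₀ ≤ (N : ℝ) / 8 := by
      have hstep : 2 * (c : ℝ) * (r : ℝ) * Real.log N
          ≤ 2 * (c : ℝ) * (r : ℝ) * ((N : ℝ) / (16 * (c : ℝ) * (r : ℝ))) :=
        mul_le_mul_of_nonneg_left hNlog (by positivity)
      calc x₀ = 2 * (c : ℝ) * (r : ℝ) * Real.log N := rfl
        _ ≤ 2 * (c : ℝ) * (r : ℝ) * ((N : ℝ) / (16 * (c : ℝ) * (r : ℝ))) := hstep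
        _ = (N : ℝ) / 8 := by field_simp; ring
    have hNR4 : (4 : ℝ) ≤ (N : ℝ) := by exact_mod_cast hN4
    have : ((2 * L : ℕ) : ℝ) < (N : ℝ) := by push_cast; nlinarith
    have h := this
    exact_mod_cast h.le
  -- Bertrand prime
  obtain ⟨P, hPp, hPgt, hPle2⟩ := Nat.exists_prime_lt_and_le_two_mul (N / 2) (by omega)
  have hPN : P ≤ N := le_trans hPle2 (by omega)
  have hNP : N + 1 ≤ 2 * P := by omega
  have hP0 : 0 < P := hPp.pos
  haveI : Fact (Nat.Prime P) := ⟨hPp⟩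
  haveI : NeZero P := ⟨by omega⟩
  -- power identities
  have hmsplit : N ^ (2 * r - 2) * N = N ^ (2 * r - 1) := by
    rw [← pow_succ]; congr 1; omega
  have hmN : N ^ (2 * r - 1) * N = N ^ (2 * r) := by
    rw [← pow_succ]; congr 1; omega
  have hNm : N ≤ N ^ (2 * r - 1) := by
    calc N = N ^ 1 := (pow_one N).symm
    _ ≤ N ^ (2 * r - 1) := Nat.pow_le_pow_right (by omega) (by omega)
  have hpow22 : 1 ≤ N ^ (2 * r - 2) := Nat.one_le_pow _ _ (by omega)
  have hPdiv : N ^ (2 * r - 1) / P + 1 ≤ 3 * N ^ (2 * r - 2) := by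
    have h1 : N ^ (2 * r - 1) ≤ (2 * N ^ (2 * r - 2)) * P := by
      calc N ^ (2 * r - 1) = N ^ (2 * r - 2) * N := hmsplit.symm
      _ ≤ N ^ (2 * r - 2) * (2 * P) := Nat.mul_le_mul_left _ (by omega)
      _ = (2 * N ^ (2 * r - 2)) * P := by ring
    have h2 : N ^ (2 * r - 1) / P ≤ 2 * N ^ (2 * r - 2) := by
      have := Nat.div_le_div_right (c := P) h1
      rwa [Nat.mul_div_cancel _ hP0] at this
    omega
  have hPc : N ^ c ≤ P ^ (c + 1) := by
    have h1 : 2 ^ (c + 1) * N ^ c ≤ 2 ^ (c + 1) * P ^ (c + 1) := by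
      calc 2 ^ (c + 1) * N ^ c ≤ N * N ^ c := Nat.mul_le_mul_right _ hN2c
      _ = N ^ (c + 1) := by rw [pow_succ]; ring
      _ ≤ (2 * P) ^ (c + 1) := Nat.pow_le_pow_left (by omega) _
      _ = 2 ^ (c + 1) * P ^ (c + 1) := by rw [mul_pow]
    exact Nat.le_of_mul_le_mul_left h1 (by positivity)
  have hcN : 4 * c ≤ N := by
    have h2c := two_mul_le_two_pow hc
    have h4c : 4 * c ≤ 2 ^ (c + 1) := by
      calc 4 * c = 2 * c * 2 := by ring
      _ ≤ 2 ^ c * 2 := Nat.mul_le_mul_right _ h2c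
      _ = 2 ^ (c + 1) := (pow_succ 2 c).symm
    omega
  -- the family
  have hfam : ∃ Aset : Fin (N ^ c) → Finset (Fin (N ^ (2 * r))),
      (∀ v, (Aset v).card = N ^ (2 * r - 1)) ∧ Function.Injective Aset ∧
      (∀ v w, v ≠ w → (Aset v ∩ Aset w).card ≤ c * (N ^ (2 * r - 1) / P + 1)) := by
    let κ : Fin (N ^ c) → (Fin (c + 1) → Fin P) := fun v =>
      finFunctionFinEquiv.symm (Fin.castLE hPc v)
    have hκ : Function.Injective κ := by
      intro v w h
      have h1 := finFunctionFinEquiv.symm.injective h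
      have h2 := congrArg Fin.val h1
      simp only [Fin.coe_castLE] at h2
      exact Fin.ext h2
    let coeffs : Fin (N ^ c) → (Fin (c + 1) → ZMod P) := fun v i => ((κ v i : ℕ) : ZMod P)
    have hcoeffs : Function.Injective coeffs := by
      intro v w h
      apply hκ
      funext i
      apply Fin.ext
      have hi : ((κ v i : ℕ) : ZMod P) = ((κ w i : ℕ) : ZMod P) := congrFun h i
      calc (κ v i : ℕ) = (((κ v i : ℕ) : ZMod P)).val :=
            (ZMod.val_cast_of_lt (κ v i).isLt).symm
        _ = (((κ w i : ℕ) : ZMod P)).val := by rw [hi]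
        _ = (κ w i : ℕ) := ZMod.val_cast_of_lt (κ w i).isLt
    let g : Fin (N ^ c) → Fin (N ^ (2 * r - 1)) → Fin N := fun v x =>
      ⟨((polyOf c (coeffs v)).eval ((x : ℕ) : ZMod P)).val,
        lt_of_lt_of_le (ZMod.val_lt _) hPN⟩
    let eqv : Fin (N ^ (2 * r - 1)) × Fin N ≃ Fin (N ^ (2 * r)) :=
      finProdFinEquiv.trans (finCongr hmN)
    have hmap_inj : ∀ v, Function.Injective (fun x => eqv (x, g v x)) := by
      intro v x y h
      have := eqv.injective h
      exact congrArg Prod.fst this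
    set F : Fin (N ^ c) → Finset (Fin (N ^ (2 * r))) :=
      fun v => Finset.image (fun x => eqv (x, g v x)) Finset.univ with hFdef
    have hFcard : ∀ v, (F v).card = N ^ (2 * r - 1) := by
      intro v
      rw [hFdef, Finset.card_image_of_injective _ (hmap_inj v), Finset.card_univ,
        Fintype.card_fin]
    have hFagree : ∀ v w, v ≠ w → (F v ∩ F w).card ≤ c * (N ^ (2 * r - 1) / P + 1) := by
      intro v w hvw
      have hpoly : coeffs v ≠ coeffs w := fun h => hvw (hcoeffs h)
      obtain ⟨hD, hdne⟩ := roots_card_le c hpoly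
      set d : Polynomial (ZMod P) := polyOf c (coeffs v) - polyOf c (coeffs w) with hddef
      have hsub : F v ∩ F w ⊆
          (Finset.univ.filter (fun x : Fin (N ^ (2 * r - 1)) =>
            ((x : ℕ) : ZMod P) ∈ d.roots.toFinset)).image (fun x => eqv (x, g v x)) := by
        intro y hy
        obtain ⟨hyv, hyw⟩ := Finset.mem_inter.1 hy
        obtain ⟨x, -, hx⟩ := Finset.mem_image.1 hyv
        obtain ⟨x', -, hx'⟩ := Finset.mem_image.1 hyw
        have hxx : ((x, g v x) : Fin (N ^ (2 * r - 1)) × Fin N) = (x', g w x') :=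
          eqv.injective (hx.trans hx'.symm)
        have hx1 : x = x' := congrArg Prod.fst hxx
        subst hx1
        have hx2 : g v x = g w x := congrArg Prod.snd hxx
        have hval : ((polyOf c (coeffs v)).eval ((x : ℕ) : ZMod P)).val
            = ((polyOf c (coeffs w)).eval ((x : ℕ) : ZMod P)).val := congrArg Fin.val hx2
        have heval : (polyOf c (coeffs v)).eval ((x : ℕ) : ZMod P)
            = (polyOf c (coeffs w)).eval ((x : ℕ) : ZMod P) := by
          have hcast := congrArg (Nat.cast : ℕ → ZMod P) hval
          rwa [ZMod.natCast_val, ZMod.natCast_val, ZMod.cast_id, ZMod.cast_id] at hcast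
        refine Finset.mem_image.2 ⟨x, ?_, hx⟩
        refine Finset.mem_filter.2 ⟨Finset.mem_univ _, ?_⟩
        rw [Multiset.mem_toFinset, Polynomial.mem_roots hdne]
        simp [hddef, Polynomial.IsRoot, sub_eq_zero, heval]
      calc (F v ∩ F w).card
          ≤ ((Finset.univ.filter (fun x : Fin (N ^ (2 * r - 1)) =>
              ((x : ℕ) : ZMod P) ∈ d.roots.toFinset)).image (fun x => eqv (x, g v x))).card :=
            Finset.card_le_card hsub
        _ ≤ (Finset.univ.filter (fun x : Fin (N ^ (2 * r - 1)) =>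
              ((x : ℕ) : ZMod P) ∈ d.roots.toFinset)).card := Finset.card_image_le
        _ ≤ d.roots.toFinset.card * (N ^ (2 * r - 1) / P + 1) :=
            card_cast_mem_le P (N ^ (2 * r - 1)) _
        _ ≤ c * (N ^ (2 * r - 1) / P + 1) := Nat.mul_le_mul_right _ hD
    have hFinj : Function.Injective F := by
      intro v w h
      by_contra hvw
      have h1 := hFagree v w hvw
      rw [h, Finset.inter_self, hFcard w] at h1
      have h2 : c * (N ^ (2 * r - 1) / P + 1) ≤ c * (3 * N ^ (2 * r - 2)) :=
        Nat.mul_le_mul_left _ hPdiv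
      have h4 : N ^ (2 * r - 1) < N ^ (2 * r - 1) := by
        calc N ^ (2 * r - 1) ≤ c * (3 * N ^ (2 * r - 2)) := le_trans h1 h2
          _ = (3 * c) * N ^ (2 * r - 2) := by ring
          _ < N * N ^ (2 * r - 2) :=
              (Nat.mul_lt_mul_right (by omega : 0 < N ^ (2 * r - 2))).2 (by omega)
          _ = N ^ (2 * r - 1) := by rw [mul_comm]; exact hmsplit
      omega
    exact ⟨F, hFcard, hFinj, hFagree⟩
  obtain ⟨Aset, hAcard, hAinj, hAgree⟩ := hfam
  refine ⟨Finset.image Aset Finset.univ, ?_, ?_, ?_⟩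
  · rw [Finset.card_image_of_injective _ hAinj, Finset.card_univ, Fintype.card_fin]
  · intro A hA
    obtain ⟨v, -, rfl⟩ := Finset.mem_image.1 hA
    exact hAcard v
  · intro A hA B hB hAB hne
    obtain ⟨v, -, rfl⟩ := Finset.mem_image.1 hA
    obtain ⟨w, -, rfl⟩ := Finset.mem_image.1 hB
    have hvw : v ≠ w := fun h => hAB (congrArg Aset h)
    -- the bad event as a concrete filter
    set badL : Finset (Finset (Fin (N ^ (2 * r)))) :=
      (Finset.powersetCard N (Aset v)).filter (fun T => L ≤ (T ∩ Aset w).card) with hbadLdef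
    have hs3 : (Aset v ∩ Aset w).card ≤ 3 * c * N ^ (2 * r - 2) := by
      calc (Aset v ∩ Aset w).card ≤ c * (N ^ (2 * r - 1) / P + 1) := hAgree v w hvw
      _ ≤ c * (3 * N ^ (2 * r - 2)) := Nat.mul_le_mul_left _ hPdiv
      _ = 3 * c * N ^ (2 * r - 2) := by ring
    have hbadR : badL.card ≤
        (3 * c * N ^ (2 * r - 2)).choose L * ((N ^ (2 * r - 1) - L).choose (N - L)) := by
      have h0 := card_bad_le (Aset v) (Aset w) N L
      rw [hAcard v] at h0
      exact le_trans h0 (Nat.mul_le_mul_right _ (Nat.choose_le_choose L hs3))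
    have hX := key_real_bound c r N L (3 * c * N ^ (2 * r - 2)) hc hr hN4 hL36 h2L hxL le_rfl
    have hmain : (badL.card : ℝ) * (N : ℝ) ^ (c * r) ≤ ((N ^ (2 * r - 1)).choose N : ℝ) := by
      have hNL : (0 : ℝ) < (N : ℝ) ^ L := by positivity
      rw [← mul_le_mul_iff_left₀ hNL]
      have hcast1 : (badL.card : ℝ) ≤ ((3 * c * N ^ (2 * r - 2)).choose L : ℝ)
          * (((N ^ (2 * r - 1) - L).choose (N - L)) : ℝ) := by exact_mod_cast hbadR
      have h2' : (((N ^ (2 * r - 1) - L).choose (N - L)) : ℝ)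
            * ((N ^ (2 * r - 1) - L : ℕ) : ℝ) ^ L
          ≤ ((N ^ (2 * r - 1)).choose N : ℝ) * (N : ℝ) ^ L := by
        exact_mod_cast choose_mul_pow_le L (N ^ (2 * r - 1)) N (by omega)
      calc (badL.card : ℝ) * (N : ℝ) ^ (c * r) * (N : ℝ) ^ L
          = (badL.card : ℝ) * ((N : ℝ) ^ (c * r) * (N : ℝ) ^ L) := by ring
        _ ≤ (((3 * c * N ^ (2 * r - 2)).choose L : ℝ)
              * (((N ^ (2 * r - 1) - L).choose (N - L)) : ℝ))
              * ((N : ℝ) ^ (c * r) * (N : ℝ) ^ L) :=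
            mul_le_mul_of_nonneg_right hcast1 (by positivity)
        _ = (((3 * c * N ^ (2 * r - 2)).choose L : ℝ) * (N : ℝ) ^ (c * r) * (N : ℝ) ^ L)
              * (((N ^ (2 * r - 1) - L).choose (N - L)) : ℝ) := by ring
        _ ≤ ((N ^ (2 * r - 1) - L : ℕ) : ℝ) ^ L
              * (((N ^ (2 * r - 1) - L).choose (N - L)) : ℝ) :=
            mul_le_mul_of_nonneg_right hX (by positivity)
        _ = (((N ^ (2 * r - 1) - L).choose (N - L)) : ℝ)
              * ((N ^ (2 * r - 1) - L : ℕ) : ℝ) ^ L := by ring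
        _ ≤ ((N ^ (2 * r - 1)).choose N : ℝ) * (N : ℝ) ^ L := h2'
    -- finish in ℝ≥0∞
    rw [PMF.toOuterMeasure_uniformOfFinset_apply, Finset.card_powersetCard, hAcard v]
    have hch : 0 < (N ^ (2 * r - 1)).choose N := Nat.choose_pos hNm
    refine le_trans (ENNReal.div_le_div_right
      (?_ : _ ≤ ((badL.card : ℕ) : ℝ≥0∞)) _) ?_
    · have hsub : (Finset.powersetCard N (Aset v)).filter
          (· ∈ {T : Finset (Fin (N ^ (2 * r))) |
            x₀ ≤ ((T ∩ Aset w).card : ℝ)}) ⊆ badL := by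
        rw [hbadLdef]
        exact Finset.monotone_filter_right _ (fun T _ hT => Nat.ceil_le.2 hT)
      exact Nat.cast_le.2 (Finset.card_le_card hsub)
    · rw [ENNReal.div_le_iff (by exact_mod_cast hch.ne') (ENNReal.natCast_ne_top _)]
      have hpow : (0 : ℝ) < (N : ℝ) ^ (c * r) := by positivity
      calc ((badL.card : ℕ) : ℝ≥0∞) = ENNReal.ofReal ((badL.card : ℕ) : ℝ) :=
            (ENNReal.ofReal_natCast _).symm
        _ ≤ ENNReal.ofReal (((N : ℝ) ^ (c * r))⁻¹ * (((N ^ (2 * r - 1)).choose N : ℕ) : ℝ)) := by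
            apply ENNReal.ofReal_le_ofReal
            rw [inv_mul_eq_div, le_div_iff₀ hpow]
            exact hmain
        _ = ENNReal.ofReal (((N : ℝ) ^ (c * r))⁻¹) * (((N ^ (2 * r - 1)).choose N : ℕ) : ℝ≥0∞) := by
            rw [ENNReal.ofReal_mul (by positivity), ENNReal.ofReal_natCast]
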